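/- (Partition lemma, part i.) For every integer d ≥ 1 there exists a constant C > 0, depending only on d, with the following property. Let S be a finite set of n points of ℝ^d and let r be an integer with 1 ≤ r ≤ n. Then there exists a partition Π of S into at most r pairwise disjoint subsets, each of cardinality at most ⌈n/r⌉, such that for every axis-aligned box B ⊆ ℝ^d, the number of subsets P ∈ Π that partially intersect B (i.e., P ∩ B ≠ ∅ but P ⊄ B) is at most C · r^{1 − 1/d}. -/

import Mathlib

open scoped Classical

namespace PartitionLemmaAux

variable {α β : Type*}

/-- Cut a list into consecutive chunks of size `m` (last chunk possibly smaller). -/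
def chunks (m : ℕ) (l : List α) : List (List α) :=
  if h : l.isEmpty || m == 0 then [] else l.take m :: chunks m (l.drop m)
termination_by l.length
decreasing_by
  simp only [Bool.or_eq_true, List.isEmpty_iff, beq_iff_eq, not_or] at h
  have h1 : 0 < l.length := List.length_pos_iff.mpr h.1
  have h2 : m ≠ 0 := h.2
  simp only [List.length_drop]
  omega

theorem chunks_nil (m : ℕ) : chunks m ([] : List α) = [] := by
  rw [chunks]; simp

theorem chunks_cons (m : ℕ) (l : List α) (hm : m ≠ 0) (hl : l ≠ []) :
    chunks m l = l.take m :: chunks m (l.drop m) := by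
  rw [chunks]; simp [List.isEmpty_iff, hm, hl]

theorem chunks_flatten (m : ℕ) (hm : m ≠ 0) (l : List α) : (chunks m l).flatten = l := by
  by_cases hl : l = []
  · subst hl; simp [chunks_nil]
  · rw [chunks_cons m l hm hl]
    have : (l.drop m).length < l.length := by
      have h1 : 0 < l.length := List.length_pos_iff.mpr hl
      simp only [List.length_drop]; omega
    rw [List.flatten_cons, chunks_flatten m hm (l.drop m), List.take_append_drop]
termination_by l.length

theorem length_chunks_le (m B : ℕ) (hm : m ≠ 0) (l : List α) (hB : l.length ≤ m * B) :
    (chunks m l).length ≤ B := by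
  by_cases hl : l = []
  · subst hl; simp [chunks_nil]
  · rw [chunks_cons m l hm hl]
    have h1 : 0 < l.length := List.length_pos_iff.mpr hl
    have hB1 : 1 ≤ B := by
      rcases Nat.eq_zero_or_pos B with h | h
      · subst h; omega
      · exact h
    have : (chunks m (l.drop m)).length ≤ B - 1 := by
      apply length_chunks_le m (B - 1) hm
      simp only [List.length_drop]
      have hq : m * (B - 1) + m = m * B := by
        have h' : B - 1 + 1 = B := by omega
        calc m * (B - 1) + m = m * ((B - 1) + 1) := (Nat.mul_succ _ _).symm
          _ = m * B := by rw [h']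
      omega
    simp only [List.length_cons]
    omega
termination_by l.length
decreasing_by
  have h1 : 0 < l.length := List.length_pos_iff.mpr hl
  simp only [List.length_drop]; omega

theorem mem_chunks_length_le (m : ℕ) (l : List α) {c : List α} (hc : c ∈ chunks m l) :
    c.length ≤ m := by
  by_cases h : l = [] ∨ m = 0
  · rcases h with h | h
    · subst h; rw [chunks_nil] at hc; simp at hc
    · subst h
      by_cases hl : l = []
      · subst hl; rw [chunks_nil] at hc; simp at hc
      · rw [chunks] at hc; simp at hc
  · push_neg at h
    obtain ⟨hl, hm⟩ := h
    rw [chunks_cons m l hm hl] at hc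
    rcases List.mem_cons.mp hc with h' | h'
    · subst h'; simp
    · exact mem_chunks_length_le m (l.drop m) h'
termination_by l.length
decreasing_by
  have h1 : 0 < l.length := List.length_pos_iff.mpr hl
  simp only [List.length_drop]; omega

theorem mem_chunks_length_eq_of_dvd (m : ℕ) (hm : m ≠ 0) (l : List α) (hdvd : m ∣ l.length)
    {c : List α} (hc : c ∈ chunks m l) : c.length = m := by
  by_cases hl : l = []
  · subst hl; rw [chunks_nil] at hc; simp at hc
  · rw [chunks_cons m l hm hl] at hc
    have h1 : 0 < l.length := List.length_pos_iff.mpr hl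
    have hml : m ≤ l.length := Nat.le_of_dvd h1 hdvd
    rcases List.mem_cons.mp hc with h' | h'
    · subst h'; simp [hml]
    · apply mem_chunks_length_eq_of_dvd m hm (l.drop m) _ h'
      simp only [List.length_drop]
      exact (Nat.dvd_sub hdvd (dvd_refl m))
termination_by l.length
decreasing_by
  have h1 : 0 < l.length := List.length_pos_iff.mpr hl
  simp only [List.length_drop]; omega

theorem dropLast_chunks_length (m : ℕ) (hm : m ≠ 0) (l : List α)
    {c : List α} (hc : c ∈ (chunks m l).dropLast) : c.length = m := by
  by_cases hl : l = []
  · subst hl; rw [chunks_nil] at hc; simp at hc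
  · rw [chunks_cons m l hm hl] at hc
    by_cases hrest : chunks m (l.drop m) = []
    · rw [hrest] at hc; simp at hc
    · rw [List.dropLast_cons_of_ne_nil hrest] at hc
      rcases List.mem_cons.mp hc with h' | h'
      · subst h'
        have hdm : l.drop m ≠ [] := by
          intro hh; rw [hh, chunks_nil] at hrest; exact hrest rfl
        have : 0 < (l.drop m).length := List.length_pos_iff.mpr hdm
        simp only [List.length_drop] at this
        simp only [List.length_take]
        omega
      · exact dropLast_chunks_length m hm (l.drop m) h'
termination_by l.length
decreasing_by
  have h1 : 0 < l.length := List.length_pos_iff.mpr hl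
  simp only [List.length_drop]; omega


theorem countP_flatMap (p : β → Bool) (f : α → List β) (L : List α) :
    (L.flatMap f).countP p = (L.map fun c => (f c).countP p).sum := by
  induction L with
  | nil => simp
  | cons a L ih => simp [List.flatMap_cons, List.countP_append, ih]

theorem sum_map_le_length_mul (g : α → ℕ) (N : ℕ) (L : List α) (h : ∀ c ∈ L, g c ≤ N) :
    (L.map g).sum ≤ L.length * N := by
  induction L with
  | nil => simp
  | cons a L ih =>
    simp only [List.map_cons, List.sum_cons, List.length_cons]
    have h1 := h a (List.mem_cons_self)
    have h2 := ih fun c hc => h c (List.mem_cons_of_mem _ hc)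
    calc g a + (L.map g).sum ≤ N + L.length * N := Nat.add_le_add h1 h2
      _ = (L.length + 1) * N := by ring

theorem sum_map_le_of_atMostOne (g : α → ℕ) (N : ℕ) (L : List α)
    (h1 : ∀ c ∈ L, g c ≤ N)
    (h2 : L.Pairwise fun a b => g a = 0 ∨ g b = 0) :
    (L.map g).sum ≤ N := by
  induction L with
  | nil => simp
  | cons a L ih =>
    rw [List.pairwise_cons] at h2
    simp only [List.map_cons, List.sum_cons]
    by_cases ha : g a = 0
    · rw [ha, Nat.zero_add]
      exact ih (fun c hc => h1 c (List.mem_cons_of_mem _ hc)) h2.2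
    · have hz : ∀ c ∈ L, g c = 0 := by
        intro c hc
        rcases h2.1 c hc with h | h
        · exact absurd h ha
        · exact h
      have : (L.map g).sum = 0 := by
        apply List.sum_eq_zero
        intro x hx
        rcases List.mem_map.mp hx with ⟨c, hc, rfl⟩
        exact hz c hc
      rw [this, Nat.add_zero]
      exact h1 a (List.mem_cons_self)

theorem flatten_flatMap_perm (f : List β → List (List β)) (L : List (List β))
    (h : ∀ c ∈ L, (f c).flatten.Perm c) :
    (L.flatMap f).flatten.Perm L.flatten := by
  induction L with
  | nil => simp
  | cons a L ih =>
    rw [List.flatMap_cons, List.flatten_append, List.flatten_cons]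
    exact (h a (List.mem_cons_self)).append
      (ih fun c hc => h c (List.mem_cons_of_mem _ hc))

theorem flatten_length_of_all (m : ℕ) (L : List (List α)) (h : ∀ c ∈ L, c.length = m) :
    L.flatten.length = L.length * m := by
  induction L with
  | nil => simp
  | cons a L ih =>
    rw [List.flatten_cons, List.length_append, List.length_cons,
      h a (List.mem_cons_self), ih fun c hc => h c (List.mem_cons_of_mem _ hc)]
    ring

theorem dropLast_flatMap_prop (f : α → List β) (q : β → Prop) (L : List α)
    (h1 : ∀ c ∈ L.dropLast, ∀ P ∈ f c, q P)
    (h2 : ∀ c ∈ L, ∀ P ∈ (f c).dropLast, q P) :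
    ∀ P ∈ (L.flatMap f).dropLast, q P := by
  induction L with
  | nil => simp
  | cons a L ih =>
    intro P hP
    rw [List.flatMap_cons] at hP
    by_cases hL : L.flatMap f = []
    · rw [hL, List.append_nil] at hP
      exact h2 a (List.mem_cons_self) P hP
    · have hLne : L ≠ [] := by rintro rfl; simp at hL
      rw [List.dropLast_append_of_ne_nil hL] at hP
      rcases List.mem_append.mp hP with h | h
      · exact h1 a (by rw [List.dropLast_cons_of_ne_nil hLne]; exact List.mem_cons_self) P h
      · exact ih
          (fun c hc => h1 c (by
            rw [List.dropLast_cons_of_ne_nil hLne]; exact List.mem_cons_of_mem _ hc))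
          (fun c hc => h2 c (List.mem_cons_of_mem _ hc)) P h

theorem chunks_pairwise (m : ℕ) (hm : m ≠ 0) (R : α → α → Prop) (l : List α)
    (h : l.Pairwise R) :
    (chunks m l).Pairwise fun c c' => ∀ x ∈ c, ∀ y ∈ c', R x y := by
  have h' : ((chunks m l).flatten).Pairwise R := by rw [chunks_flatten m hm l]; exact h
  exact (List.pairwise_flatten.mp h').2

theorem countP_nonempty_le (m r : ℕ) (hm : m ≠ 0) (hr : 1 ≤ r) (L : List (List α))
    (hfull : ∀ P ∈ L.dropLast, P.length = m)
    (hn : L.flatten.length ≤ m * r) :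
    L.countP (fun P => !P.isEmpty) ≤ r := by
  by_cases hL : L = []
  · subst hL; simp
  · have hdecomp := List.dropLast_append_getLast hL
    set M := L.dropLast with hM
    set z := L.getLast hL with hz
    have hcnt : L.countP (fun P => !P.isEmpty) =
        M.countP (fun P => !P.isEmpty) + (if z.isEmpty then 0 else 1) := by
      rw [← hdecomp, List.countP_append]
      congr 1
      by_cases h : z.isEmpty <;> simp [List.countP_cons, h]
    have hMcnt : M.countP (fun P => !P.isEmpty) = M.length := by
      apply List.countP_eq_length.mpr
      intro P hP
      have hPl := hfull P hP
      simp only [Bool.not_eq_true']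
      rw [List.isEmpty_eq_false_iff]
      intro hnil
      rw [hnil] at hPl
      simp at hPl
      omega
    have hflat : M.flatten.length + z.length = L.flatten.length := by
      conv_rhs => rw [← hdecomp]
      rw [List.flatten_append]
      simp
    have hMlen : M.flatten.length = M.length * m := flatten_length_of_all m M hfull
    by_cases hze : z.isEmpty
    · rw [hcnt, hMcnt, if_pos hze]
      have : z.length = 0 := by rw [List.isEmpty_iff] at hze; rw [hze]; rfl
      have hle : M.length * m ≤ m * r := by omega
      rw [Nat.mul_comm] at hle
      have := Nat.le_of_mul_le_mul_left hle (Nat.pos_of_ne_zero hm)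
      omega
    · rw [hcnt, hMcnt, if_neg hze]
      have hz1 : 1 ≤ z.length := by
        rcases Nat.eq_zero_or_pos z.length with h | h
        · rw [List.length_eq_zero_iff] at h
          rw [h] at hze; simp at hze
        · exact h
      have hlt : m * M.length < m * r := by
        rw [Nat.mul_comm m M.length] at *
        omega
      have := Nat.lt_of_mul_lt_mul_left hlt
      omega

def coordOf (d k : ℕ) (hd : 0 < d) : Fin d := ⟨d - (k + 1), by omega⟩

/-- Multilevel partition: with `k` levels remaining, sort by coordinate `d - k`
and cut into chunks of size `m * t ^ (k-1)`, recursing into each chunk. -/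
noncomputable def build (d : ℕ) (hd : 0 < d) (m t : ℕ) :
    ℕ → List (Fin d → ℝ) → List (List (Fin d → ℝ))
  | 0, l => [l]
  | k + 1, l =>
      (chunks (m * t ^ k)
        (l.mergeSort fun x y => decide (x (coordOf d k hd) ≤ y (coordOf d k hd)))).flatMap
        (build d hd m t k)

theorem build_zero {d : ℕ} (hd : 0 < d) (m t : ℕ) (l : List (Fin d → ℝ)) :
    build d hd m t 0 l = [l] := rfl

theorem build_succ {d : ℕ} (hd : 0 < d) (m t k : ℕ) (l : List (Fin d → ℝ)) :
    build d hd m t (k + 1) l =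
      (chunks (m * t ^ k)
        (l.mergeSort fun x y => decide (x (coordOf d k hd) ≤ y (coordOf d k hd)))).flatMap
        (build d hd m t k) := rfl

variable {d m t : ℕ}

theorem build_flatten_perm (hd : 0 < d) (hm : m ≠ 0) (ht : t ≠ 0) (k : ℕ) :
    ∀ l : List (Fin d → ℝ), ((build d hd m t k l).flatten).Perm l := by
  induction k with
  | zero => intro l; simp [build_zero]
  | succ k ih =>
    intro l
    rw [build_succ]
    have hmt : m * t ^ k ≠ 0 := Nat.mul_ne_zero hm (pow_ne_zero _ ht)
    refine (flatten_flatMap_perm _ _ fun c _ => ih c).trans ?_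
    rw [chunks_flatten _ hmt]
    exact List.mergeSort_perm l _

theorem mem_build_subset (hd : 0 < d) (hm : m ≠ 0) (ht : t ≠ 0) {k : ℕ}
    {l P : List (Fin d → ℝ)} (hP : P ∈ build d hd m t k l) : ∀ x ∈ P, x ∈ l := by
  intro x hx
  have hx' : x ∈ (build d hd m t k l).flatten := List.mem_flatten.mpr ⟨P, hP, hx⟩
  exact ((build_flatten_perm hd hm ht k l).mem_iff).mp hx'

theorem build_length_le (hd : 0 < d) (hm : m ≠ 0) (ht : t ≠ 0) (k : ℕ) :
    ∀ l : List (Fin d → ℝ), l.length ≤ m * t ^ k → (build d hd m t k l).length ≤ t ^ k := by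
  induction k with
  | zero => intro l _; simp [build_zero]
  | succ k ih =>
    intro l hlen
    rw [build_succ, List.length_flatMap]
    have hmt : m * t ^ k ≠ 0 := Nat.mul_ne_zero hm (pow_ne_zero _ ht)
    set ls := l.mergeSort fun x y => decide (x (coordOf d k hd) ≤ y (coordOf d k hd)) with hls
    have h1 : (chunks (m * t ^ k) ls).length ≤ t := by
      apply length_chunks_le _ _ hmt
      rw [List.length_mergeSort]
      calc l.length ≤ m * t ^ (k + 1) := hlen
        _ = m * t ^ k * t := by ring
    calc ((chunks (m * t ^ k) ls).map fun c => (build d hd m t k c).length).sum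
        ≤ (chunks (m * t ^ k) ls).length * t ^ k := by
          apply sum_map_le_length_mul
          intro c hc
          exact ih c (mem_chunks_length_le _ _ hc)
      _ ≤ t * t ^ k := Nat.mul_le_mul_right _ h1
      _ = t ^ (k + 1) := by ring

theorem build_mem_length (hd : 0 < d) (hm : m ≠ 0) (ht : t ≠ 0) (k : ℕ) :
    ∀ (l P : List (Fin d → ℝ)), P ∈ build d hd m t (k + 1) l → P.length ≤ m := by
  induction k with
  | zero =>
    intro l P hP
    rw [build_succ] at hP
    rcases List.mem_flatMap.mp hP with ⟨c, hc, hPc⟩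
    rw [build_zero] at hPc
    rcases List.mem_singleton.mp hPc with rfl
    have := mem_chunks_length_le _ _ hc
    simpa using this
  | succ k ih =>
    intro l P hP
    rw [build_succ] at hP
    rcases List.mem_flatMap.mp hP with ⟨c, _, hPc⟩
    exact ih c P hPc

theorem build_exact (hd : 0 < d) (hm : m ≠ 0) (ht : t ≠ 0) (k : ℕ) :
    ∀ l : List (Fin d → ℝ), l.length = m * t ^ k →
      ∀ P ∈ build d hd m t k l, P.length = m := by
  induction k with
  | zero =>
    intro l hlen P hP
    rw [build_zero] at hP
    rcases List.mem_singleton.mp hP with rfl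
    simpa using hlen
  | succ k ih =>
    intro l hlen P hP
    rw [build_succ] at hP
    rcases List.mem_flatMap.mp hP with ⟨c, hc, hPc⟩
    have hmt : m * t ^ k ≠ 0 := Nat.mul_ne_zero hm (pow_ne_zero _ ht)
    have hdvd : m * t ^ k ∣
        (l.mergeSort fun x y => decide (x (coordOf d k hd) ≤ y (coordOf d k hd))).length := by
      rw [List.length_mergeSort, hlen]
      exact ⟨t, by ring⟩
    exact ih c (mem_chunks_length_eq_of_dvd _ hmt _ hdvd hc) P hPc

theorem build_dropLast (hd : 0 < d) (hm : m ≠ 0) (ht : t ≠ 0) (k : ℕ) :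
    ∀ l : List (Fin d → ℝ), ∀ P ∈ (build d hd m t k l).dropLast, P.length = m := by
  induction k with
  | zero => intro l; simp [build_zero]
  | succ k ih =>
    intro l
    rw [build_succ]
    have hmt : m * t ^ k ≠ 0 := Nat.mul_ne_zero hm (pow_ne_zero _ ht)
    apply dropLast_flatMap_prop
    · intro c hc P hP
      exact build_exact hd hm ht k c (dropLast_chunks_length _ hmt _ hc) P hP
    · intro c _ P hP
      exact ih c P hP

theorem build_countP_le (hd : 0 < d) (hm : m ≠ 0) (ht : t ≠ 0) (j : Fin d)
    (p : List (Fin d → ℝ) → Prop)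
    (hmono : ∀ P Q : List (Fin d → ℝ), (∀ x ∈ P, x ∈ Q) → p P → p Q)
    (hord : ∀ P Q : List (Fin d → ℝ), (∀ x ∈ P, ∀ y ∈ Q, x j ≤ y j) → p P → p Q → False)
    (k : ℕ) :
    ∀ l : List (Fin d → ℝ), d - k ≤ (j : ℕ) → l.length ≤ m * t ^ k →
      (build d hd m t k l).countP (fun P => decide (p P)) ≤ t ^ (k - 1) := by
  induction k with
  | zero =>
    intro l hj _
    have := j.isLt
    omega
  | succ k ih =>
    intro l hj hlen
    have hmt : m * t ^ k ≠ 0 := Nat.mul_ne_zero hm (pow_ne_zero _ ht)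
    set j₀ := coordOf d k hd with hj₀
    set ls := l.mergeSort fun x y => decide (x j₀ ≤ y j₀) with hls
    have hls_len : ls.length = l.length := List.length_mergeSort _
    have hsorted : ls.Pairwise fun x y => x j₀ ≤ y j₀ := by
      have hs := List.pairwise_mergeSort (le := fun x y : Fin d → ℝ => decide (x j₀ ≤ y j₀))
        (fun a b c h1 h2 => by
          simp only [decide_eq_true_eq] at *
          exact le_trans h1 h2)
        (fun a b => by simpa using le_total (a j₀) (b j₀)) l
      exact hs.imp fun h => of_decide_eq_true h
    set cs := chunks (m * t ^ k) ls with hcs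
    have hcp : cs.Pairwise fun c c' => ∀ x ∈ c, ∀ y ∈ c', x j₀ ≤ y j₀ :=
      chunks_pairwise _ hmt _ _ hsorted
    have hcs_len : cs.length ≤ t := by
      apply length_chunks_le _ _ hmt
      rw [hls_len]
      calc l.length ≤ m * t ^ (k + 1) := hlen
        _ = m * t ^ k * t := by ring
    rw [build_succ, countP_flatMap]
    rcases (by omega : (j : ℕ) = d - (k + 1) ∨ d - k ≤ (j : ℕ)) with hcase | hcase
    · -- the coordinate used at this level
      have hjj : j = j₀ := by
        apply Fin.ext
        rw [hcase, hj₀]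
        rfl
      have hbound : ((cs.map fun c =>
          (build d hd m t k c).countP fun P => decide (p P)).sum) ≤ t ^ k := by
        apply sum_map_le_of_atMostOne
        · intro c hc
          calc ((build d hd m t k c).countP fun P => decide (p P))
              ≤ (build d hd m t k c).length := List.countP_le_length
            _ ≤ t ^ k := build_length_le hd hm ht k c (mem_chunks_length_le _ _ hc)
        · refine hcp.imp ?_
          intro c c' hcc'
          by_contra hboth
          push_neg at hboth
          obtain ⟨h1, h2⟩ := hboth
          obtain ⟨P, hP, hpP⟩ := List.countP_pos_iff.mp (Nat.pos_of_ne_zero h1)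
          obtain ⟨Q, hQ, hpQ⟩ := List.countP_pos_iff.mp (Nat.pos_of_ne_zero h2)
          have hpc : p c := hmono P c (mem_build_subset hd hm ht hP) (of_decide_eq_true hpP)
          have hpc' : p c' := hmono Q c' (mem_build_subset hd hm ht hQ) (of_decide_eq_true hpQ)
          exact hord c c' (by rw [hjj]; exact hcc') hpc hpc'
      calc ((cs.map fun c => (build d hd m t k c).countP fun P => decide (p P)).sum)
          ≤ t ^ k := hbound
        _ = t ^ (k + 1 - 1) := by rw [Nat.add_sub_cancel]
    · -- coordinate handled deeper in the recursion
      have hk1 : 1 ≤ k := by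
        have := j.isLt
        omega
      calc ((cs.map fun c => (build d hd m t k c).countP fun P => decide (p P)).sum)
          ≤ cs.length * t ^ (k - 1) := by
            apply sum_map_le_length_mul
            intro c hc
            exact ih c hcase (mem_chunks_length_le _ _ hc)
        _ ≤ t * t ^ (k - 1) := Nat.mul_le_mul_right _ hcs_len
        _ = t ^ (k + 1 - 1) := by
            rw [Nat.add_sub_cancel, ← pow_succ']
            congr 1
            omega

end PartitionLemmaAux

open PartitionLemmaAux in
/-- Partition lemma, part (i): for every `d ≥ 1` there is a constant `C > 0` such that
any finite set `S` of `n` points in `ℝ^d` and any `1 ≤ r ≤ n` admit a partition of `S`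
into at most `r` parts, each of size at most `⌈n/r⌉`, such that every axis-aligned box
partially intersects at most `C · r^(1-1/d)` parts. -/
theorem partition_lemma_boxes (d : ℕ) (hd : 1 ≤ d) :
    ∃ C : ℝ, 0 < C ∧
      ∀ (S : Finset (Fin d → ℝ)) (n r : ℕ), n = S.card → 1 ≤ r → r ≤ n →
        ∃ Pi : Finset (Finset (Fin d → ℝ)),
          (∀ P ∈ Pi, P.Nonempty) ∧
          (∀ P ∈ Pi, ∀ Q ∈ Pi, P ≠ Q → Disjoint P Q) ∧
          (Pi.sup id = S) ∧
          Pi.card ≤ r ∧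
          (∀ P ∈ Pi, P.card ≤ ⌈(n : ℝ) / r⌉₊) ∧
          (∀ a b : Fin d → ℝ, (∀ i, a i ≤ b i) →
            ((Pi.filter (fun P =>
              (∃ x ∈ P, ∀ i, a i ≤ x i ∧ x i ≤ b i) ∧
              ¬ (∀ x ∈ P, ∀ i, a i ≤ x i ∧ x i ≤ b i))).card : ℝ) ≤
              C * (r : ℝ) ^ (1 - 1 / (d : ℝ))) := by
  have hd0 : 0 < d := hd
  have hdR : (0 : ℝ) < d := by exact_mod_cast hd0
  refine ⟨2 * d * 2 ^ (d - 1), by positivity, ?_⟩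
  intro S n r hn hr1 hrn
  have hn1 : 1 ≤ n := le_trans hr1 hrn
  have hrR : (0 : ℝ) < r := by exact_mod_cast hr1
  have hnR : (0 : ℝ) < n := by exact_mod_cast hn1
  -- leaf size
  set m : ℕ := ⌈(n : ℝ) / r⌉₊ with hm_def
  have hm0 : m ≠ 0 := by
    have : 0 < m := Nat.ceil_pos.mpr (div_pos hnR hrR)
    omega
  have hnm : n ≤ m * r := by
    have h1 : (n : ℝ) / r ≤ m := Nat.le_ceil _
    have h2 : (n : ℝ) ≤ m * r := by
      rw [div_le_iff₀ hrR] at h1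
      exact h1
    exact_mod_cast h2
  -- branching factor
  set x : ℝ := (r : ℝ) ^ ((d : ℝ)⁻¹) with hx_def
  have hx0 : 0 < x := Real.rpow_pos_of_pos hrR _
  have hx1 : 1 ≤ x := by
    have := Real.rpow_le_rpow (by norm_num : (0:ℝ) ≤ 1)
      (by exact_mod_cast hr1 : (1:ℝ) ≤ r) (by positivity : (0:ℝ) ≤ (d:ℝ)⁻¹)
    simpa using this
  set t : ℕ := ⌈x⌉₊ with ht_def
  have ht0 : t ≠ 0 := by
    have : 0 < t := Nat.ceil_pos.mpr hx0
    omega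
  have hxt : x ≤ t := Nat.le_ceil x
  have ht2x : (t : ℝ) ≤ 2 * x := by
    have h1 : (t : ℝ) < x + 1 := Nat.ceil_lt_add_one (le_of_lt hx0)
    linarith
  have hrx : (r : ℝ) = x ^ d := by
    rw [hx_def, ← Real.rpow_natCast ((r : ℝ) ^ ((d : ℝ)⁻¹)) d, ← Real.rpow_mul (le_of_lt hrR)]
    rw [inv_mul_cancel₀ (ne_of_gt hdR), Real.rpow_one]
  have hrt : r ≤ t ^ d := by
    have h1 : (r : ℝ) ≤ (t : ℝ) ^ d := by
      rw [hrx]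
      exact pow_le_pow_left₀ (le_of_lt hx0) hxt d
    have h2 : ((t : ℕ) : ℝ) ^ d = ((t ^ d : ℕ) : ℝ) := by push_cast; ring
    rw [h2] at h1
    exact_mod_cast h1
  -- the construction
  set l : List (Fin d → ℝ) := S.toList with hl_def
  have hl_len : l.length = n := by rw [hl_def, Finset.length_toList, hn]
  set leaves : List (List (Fin d → ℝ)) := build d hd0 m t d l with hleaves_def
  set leaves' : List (List (Fin d → ℝ)) := leaves.filter (fun P => !P.isEmpty) with hleaves'_def
  set PiSet : Finset (Finset (Fin d → ℝ)) := (leaves'.map List.toFinset).toFinset with hPi_def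
  have hperm : leaves.flatten.Perm l := build_flatten_perm hd0 hm0 ht0 d l
  have hflat_nodup : leaves.flatten.Nodup := (hperm.nodup_iff).mpr (Finset.nodup_toList S)
  have hpw : leaves.Pairwise List.Disjoint := (List.nodup_flatten.mp hflat_nodup).2
  have hmemPi : ∀ Q : Finset (Fin d → ℝ), Q ∈ PiSet ↔ ∃ P ∈ leaves', P.toFinset = Q := by
    intro Q
    rw [hPi_def, List.mem_toFinset, List.mem_map]
  have hmem_ne_nil : ∀ P ∈ leaves', P ≠ [] := by
    intro P hP
    have := (List.mem_filter.mp hP).2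
    simpa using this
  have hln_bound : l.length ≤ m * t ^ d := by
    rw [hl_len]
    calc n ≤ m * r := hnm
      _ ≤ m * t ^ d := Nat.mul_le_mul_left m hrt
  refine ⟨PiSet, ?_, ?_, ?_, ?_, ?_, ?_⟩
  · -- nonempty
    intro Q hQ
    obtain ⟨P, hP, rfl⟩ := (hmemPi Q).mp hQ
    obtain ⟨y, hy⟩ := List.exists_mem_of_ne_nil P (hmem_ne_nil P hP)
    exact ⟨y, List.mem_toFinset.mpr hy⟩
  · -- pairwise disjoint
    intro Q hQ Q' hQ' hne
    obtain ⟨P, hP, rfl⟩ := (hmemPi Q).mp hQ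
    obtain ⟨P', hP', rfl⟩ := (hmemPi Q').mp hQ'
    have hPP' : P ≠ P' := by
      intro h; exact hne (by rw [h])
    have hdisj : P.Disjoint P' :=
      @List.Pairwise.forall _ _ _ ⟨fun _ _ h => List.Disjoint.symm h⟩ hpw _ (List.mem_filter.mp hP).1 _ (List.mem_filter.mp hP').1 hPP'
    rw [Finset.disjoint_left]
    intro z hz1 hz2
    exact hdisj (List.mem_toFinset.mp hz1) (List.mem_toFinset.mp hz2)
  · -- sup = S
    apply Finset.ext
    intro z
    rw [Finset.mem_sup]
    constructor
    · rintro ⟨Q, hQ, hzQ⟩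
      obtain ⟨P, hP, rfl⟩ := (hmemPi Q).mp hQ
      have hzP : z ∈ P := List.mem_toFinset.mp hzQ
      have : z ∈ leaves.flatten := List.mem_flatten.mpr ⟨P, (List.mem_filter.mp hP).1, hzP⟩
      have : z ∈ l := hperm.mem_iff.mp this
      rwa [hl_def, Finset.mem_toList] at this
    · intro hz
      have hzl : z ∈ l := by rwa [hl_def, Finset.mem_toList]
      have : z ∈ leaves.flatten := hperm.mem_iff.mpr hzl
      obtain ⟨P, hPlv, hzP⟩ := List.mem_flatten.mp this
      have hP' : P ∈ leaves' := by
        rw [hleaves'_def, List.mem_filter]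
        refine ⟨hPlv, ?_⟩
        simp only [Bool.not_eq_true', List.isEmpty_eq_false_iff]
        exact List.ne_nil_of_mem hzP
      exact ⟨P.toFinset, (hmemPi _).mpr ⟨P, hP', rfl⟩, List.mem_toFinset.mpr hzP⟩
  · -- card ≤ r
    calc PiSet.card ≤ (leaves'.map List.toFinset).length := List.toFinset_card_le _
      _ = leaves'.length := List.length_map _
      _ = leaves.countP (fun P => !P.isEmpty) := by
          rw [hleaves'_def, ← List.countP_eq_length_filter]
      _ ≤ r := by
          apply countP_nonempty_le m r hm0 hr1
          · exact build_dropLast hd0 hm0 ht0 d l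
          · rw [hperm.length_eq, hl_len]; exact hnm
  · -- sizes
    intro Q hQ
    obtain ⟨P, hP, rfl⟩ := (hmemPi Q).mp hQ
    have hd1 : d - 1 + 1 = d := by omega
    have hPlv : P ∈ build d hd0 m t (d - 1 + 1) l := by
      rw [hd1]; exact (List.mem_filter.mp hP).1
    calc P.toFinset.card ≤ P.length := List.toFinset_card_le _
      _ ≤ m := build_mem_length hd0 hm0 ht0 (d - 1) l P hPlv
  · -- crossing number
    intro a b hab
    have filter_le : ∀ (j : Fin d) (q : Finset (Fin d → ℝ) → Prop)
        (inst : DecidablePred q),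
        (∀ P Q : List (Fin d → ℝ), (∀ z ∈ P, z ∈ Q) → q P.toFinset → q Q.toFinset) →
        (∀ P Q : List (Fin d → ℝ), (∀ z ∈ P, ∀ y ∈ Q, z j ≤ y j) →
          q P.toFinset → q Q.toFinset → False) →
        (@Finset.filter _ q inst PiSet).card ≤ t ^ (d - 1) := by
      intro j q inst hq1 hq2
      have hinst : inst = fun Q => Classical.propDecidable (q Q) := Subsingleton.elim _ _
      subst hinst
      have hsub : PiSet.filter q ⊆
          ((leaves'.filter fun P => decide (q P.toFinset)).map List.toFinset).toFinset := by
        intro Q hQ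
        rw [Finset.mem_filter] at hQ
        obtain ⟨hQPi, hqQ⟩ := hQ
        obtain ⟨P, hP, rfl⟩ := (hmemPi Q).mp hQPi
        rw [List.mem_toFinset, List.mem_map]
        exact ⟨P, List.mem_filter.mpr ⟨hP, decide_eq_true hqQ⟩, rfl⟩
      calc (PiSet.filter q).card
          ≤ (((leaves'.filter fun P => decide (q P.toFinset)).map List.toFinset).toFinset).card :=
            Finset.card_le_card hsub
        _ ≤ ((leaves'.filter fun P => decide (q P.toFinset)).map List.toFinset).length :=
            List.toFinset_card_le _
        _ = (leaves'.filter fun P => decide (q P.toFinset)).length := List.length_map _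
        _ = leaves'.countP (fun P => decide (q P.toFinset)) :=
            List.countP_eq_length_filter.symm
        _ ≤ leaves.countP (fun P => decide (q P.toFinset)) :=
            List.filter_sublist.countP_le
        _ ≤ t ^ (d - 1) := by
            exact build_countP_le hd0 hm0 ht0 j (fun P => q P.toFinset) hq1 hq2 d l
              (by omega) hln_bound
    set qL : Fin d → Finset (Fin d → ℝ) → Prop :=
      fun j Q => (∃ y ∈ Q, y j < a j) ∧ (∃ z ∈ Q, a j ≤ z j) with hqL_def
    set qH : Fin d → Finset (Fin d → ℝ) → Prop :=
      fun j Q => (∃ y ∈ Q, b j < y j) ∧ (∃ z ∈ Q, z j ≤ b j) with hqH_def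
    have hsub : (PiSet.filter (fun P =>
          (∃ x ∈ P, ∀ i, a i ≤ x i ∧ x i ≤ b i) ∧
          ¬ (∀ x ∈ P, ∀ i, a i ≤ x i ∧ x i ≤ b i))) ⊆
        Finset.univ.biUnion fun j => (PiSet.filter (qL j)) ∪ (PiSet.filter (qH j)) := by
      intro Q hQ
      rw [Finset.mem_filter] at hQ
      obtain ⟨hQPi, ⟨x0, hx0Q, hx0B⟩, hnot⟩ := hQ
      push_neg at hnot
      obtain ⟨y0, hy0Q, i, hi⟩ := hnot
      rw [Finset.mem_biUnion]
      refine ⟨i, Finset.mem_univ _, ?_⟩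
      rw [Finset.mem_union]
      rcases lt_or_ge (y0 i) (a i) with h | h
      · left
        rw [Finset.mem_filter]
        exact ⟨hQPi, ⟨y0, hy0Q, h⟩, ⟨x0, hx0Q, (hx0B i).1⟩⟩
      · right
        rw [Finset.mem_filter]
        exact ⟨hQPi, ⟨y0, hy0Q, hi h⟩, ⟨x0, hx0Q, (hx0B i).2⟩⟩
    have hcnt : (PiSet.filter (fun P =>
          (∃ x ∈ P, ∀ i, a i ≤ x i ∧ x i ≤ b i) ∧
          ¬ (∀ x ∈ P, ∀ i, a i ≤ x i ∧ x i ≤ b i))).card ≤ 2 * d * t ^ (d - 1) := by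
      calc _ ≤ (Finset.univ.biUnion fun j : Fin d =>
              (PiSet.filter (qL j)) ∪ (PiSet.filter (qH j))).card := Finset.card_le_card hsub
        _ ≤ ∑ j : Fin d, ((PiSet.filter (qL j)) ∪ (PiSet.filter (qH j))).card :=
            Finset.card_biUnion_le
        _ ≤ ∑ j : Fin d, (t ^ (d - 1) + t ^ (d - 1)) := by
            apply Finset.sum_le_sum
            intro j _
            calc ((PiSet.filter (qL j)) ∪ (PiSet.filter (qH j))).card
                ≤ (PiSet.filter (qL j)).card + (PiSet.filter (qH j)).card :=
                  Finset.card_union_le _ _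
              _ ≤ t ^ (d - 1) + t ^ (d - 1) := by
                  apply Nat.add_le_add
                  · apply filter_le j (qL j) _
                    · rintro P Q hPQ ⟨⟨y, hy, hy'⟩, ⟨z, hz, hz'⟩⟩
                      exact ⟨⟨y, List.mem_toFinset.mpr (hPQ y (List.mem_toFinset.mp hy)), hy'⟩,
                        ⟨z, List.mem_toFinset.mpr (hPQ z (List.mem_toFinset.mp hz)), hz'⟩⟩
                    · rintro P Q hrel ⟨_, ⟨z, hz, hz'⟩⟩ ⟨⟨y, hy, hy'⟩, _⟩
                      have := hrel z (List.mem_toFinset.mp hz) y (List.mem_toFinset.mp hy)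
                      linarith
                  · apply filter_le j (qH j) _
                    · rintro P Q hPQ ⟨⟨y, hy, hy'⟩, ⟨z, hz, hz'⟩⟩
                      exact ⟨⟨y, List.mem_toFinset.mpr (hPQ y (List.mem_toFinset.mp hy)), hy'⟩,
                        ⟨z, List.mem_toFinset.mpr (hPQ z (List.mem_toFinset.mp hz)), hz'⟩⟩
                    · rintro P Q hrel ⟨⟨y, hy, hy'⟩, _⟩ ⟨_, ⟨z, hz, hz'⟩⟩
                      have := hrel y (List.mem_toFinset.mp hy) z (List.mem_toFinset.mp hz)
                      linarith
        _ = 2 * d * t ^ (d - 1) := by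
            rw [Finset.sum_const, Finset.card_univ, Fintype.card_fin, smul_eq_mul]
            ring
    -- now pass to the reals
    have hstep : ((PiSet.filter (fun P =>
          (∃ x ∈ P, ∀ i, a i ≤ x i ∧ x i ≤ b i) ∧
          ¬ (∀ x ∈ P, ∀ i, a i ≤ x i ∧ x i ≤ b i))).card : ℝ) ≤
        2 * d * (t : ℝ) ^ (d - 1) := by
      have := hcnt
      have h' : ((PiSet.filter _).card : ℝ) ≤ ((2 * d * t ^ (d - 1) : ℕ) : ℝ) :=
        Nat.cast_le.mpr hcnt
      calc ((PiSet.filter _).card : ℝ) ≤ ((2 * d * t ^ (d - 1) : ℕ) : ℝ) := h'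
        _ = 2 * d * (t : ℝ) ^ (d - 1) := by push_cast; ring
    have hxd : x ^ (d - 1) = (r : ℝ) ^ (1 - 1 / (d : ℝ)) := by
      rw [hx_def, ← Real.rpow_natCast ((r : ℝ) ^ ((d : ℝ)⁻¹)) (d - 1),
        ← Real.rpow_mul (le_of_lt hrR)]
      congr 1
      have hcast : ((d - 1 : ℕ) : ℝ) = (d : ℝ) - 1 := by
        rw [Nat.cast_sub hd, Nat.cast_one]
      rw [hcast]
      field_simp
    have htpow : (t : ℝ) ^ (d - 1) ≤ 2 ^ (d - 1) * (r : ℝ) ^ (1 - 1 / (d : ℝ)) := by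
      calc (t : ℝ) ^ (d - 1) ≤ (2 * x) ^ (d - 1) :=
            pow_le_pow_left₀ (by positivity) ht2x _
        _ = 2 ^ (d - 1) * x ^ (d - 1) := by rw [mul_pow]
        _ = 2 ^ (d - 1) * (r : ℝ) ^ (1 - 1 / (d : ℝ)) := by rw [hxd]
    calc ((PiSet.filter _).card : ℝ) ≤ 2 * d * (t : ℝ) ^ (d - 1) := hstep
      _ ≤ 2 * d * (2 ^ (d - 1) * (r : ℝ) ^ (1 - 1 / (d : ℝ))) := by
          apply mul_le_mul_of_nonneg_left htpow (by positivity)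
      _ = 2 * d * 2 ^ (d - 1) * (r : ℝ) ^ (1 - 1 / (d : ℝ)) := by ring
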